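/- Let W : (ℂ*)^n → ℂ be defined by W(x₁,…,xₙ) = Σⱼ xⱼ + Σⱼ 1/xⱼ + Πⱼ xⱼ + Πⱼ 1/xⱼ (the superpotential of the n-dimensional del Pezzo polytope). If (x₁,…,xₙ) is a critical point of W (i.e., all partial derivatives vanish), then setting Z = Πⱼ xⱼ, each coordinate xₖ satisfies the quadratic equation xₖ² + (Z − 1/Z)xₖ − 1 = 0. -/

import Mathlib

open Finset

/-- at a critical point of the del Pezzo superpotential
`W = Σ xⱼ + Σ 1/xⱼ + Π xⱼ + Π 1/xⱼ`, each coordinate satisfies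
`xₖ² + (Z − 1/Z)xₖ − 1 = 0` where `Z = Π xⱼ`. -/
theorem stmt_2 (n : ℕ) (x : Fin n → ℂ) (hx : ∀ j, x j ≠ 0)
    (hcrit : ∀ k, (1 : ℂ) - 1 / (x k) ^ 2 + (∏ j ∈ univ.erase k, x j)
      - (1 / (x k) ^ 2) * ∏ j ∈ univ.erase k, (x j)⁻¹ = 0) :
    ∀ k, (x k) ^ 2 + ((∏ j, x j) - 1 / ∏ j, x j) * x k - 1 = 0 := by
  intro k
  have hZ : ∏ j, x j = x k * ∏ j ∈ univ.erase k, x j :=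
    (Finset.mul_prod_erase univ x (mem_univ k)).symm
  have hZi : ∏ j ∈ univ.erase k, (x j)⁻¹ = (∏ j ∈ univ.erase k, x j)⁻¹ := by
    rw [Finset.prod_inv_distrib]
  have hPne : ∏ j ∈ univ.erase k, x j ≠ 0 :=
    Finset.prod_ne_zero_iff.mpr fun j _ => hx j
  have h := hcrit k
  rw [hZi] at h
  have hxk := hx k
  rw [hZ]
  field_simp at h ⊢
  ring_nf at h ⊢
  set P := ∏ j ∈ univ.erase k, x j with hP
  have h2 : x k ^ 2 * (-1 - P + x k ^ 2 * P + x k ^ 2 * P ^ 2) = 0 := by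
    linear_combination x k ^ 2 * h
  have hE : -1 - P + x k ^ 2 * P + x k ^ 2 * P ^ 2 = 0 :=
    (mul_eq_zero.mp h2).resolve_left (pow_ne_zero 2 hxk)
  linear_combination hE
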